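/- Let j ≥ 0 be an integer. Let v₀ ∈ P_j, and for each m ∈ {1,2,3,4} let v_{b,m} be a real polynomial of degree ≤ j+1 in the coordinate running along the edge F_m. Then the following are equivalent: (i) for every q ∈ BDM_{j+1}(K) one has −∫_K v₀ (div q) dx dy + Σ_{m=1}^{4} ∫_{F_m} v_{b,m} (q·n_m) ds = 0; (ii) there exists a constant c ∈ ℝ such that v₀ ≡ c on K and v_{b,m} ≡ c on F_m for every m. -/

import Mathlib

open MeasureTheory MvPolynomial

noncomputable section

/-- Real polynomials in two variables. -/
abbrev Poly2 := MvPolynomial (Fin 2) ℝ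

/-- Evaluate a two-variable polynomial at `(x, y)`. -/
def evalP (p : Poly2) (x y : ℝ) : ℝ := MvPolynomial.eval ![x, y] p

/-- `P_r`: total degree `≤ r`. -/
def memP (r : ℕ) (p : Poly2) : Prop := p.totalDegree ≤ r

/-- The divergence of a polynomial vector field. -/
def divP (q : Poly2 × Poly2) : Poly2 := pderiv 0 q.1 + pderiv 1 q.2

/-- The curl of a scalar polynomial: `curl φ = (−∂φ/∂y, ∂φ/∂x)`. -/
def curlP (φ : Poly2) : Poly2 × Poly2 := (-(pderiv 1 φ), pderiv 0 φ)

/-- The Brezzi–Douglas–Marini space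
`BDM_{j+1}(K) = (P_{j+1})² + span{curl (x^{j+2} y), curl (x y^{j+2})}`. -/
def memBDM (j : ℕ) (q : Poly2 × Poly2) : Prop :=
  ∃ (p₁ p₂ : Poly2) (a b : ℝ), memP (j+1) p₁ ∧ memP (j+1) p₂ ∧
    q.1 = p₁ + a • (curlP (X 0 ^ (j+2) * X 1)).1 + b • (curlP (X 0 * X 1 ^ (j+2))).1 ∧
    q.2 = p₂ + a • (curlP (X 0 ^ (j+2) * X 1)).2 + b • (curlP (X 0 * X 1 ^ (j+2))).2


/-- restriction to a horizontal line: polynomial in x -/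
def pxP (p : Poly2) (y : ℝ) : Polynomial ℝ := MvPolynomial.aeval ![Polynomial.X, Polynomial.C y] p
def pyP (p : Poly2) (x : ℝ) : Polynomial ℝ := MvPolynomial.aeval ![Polynomial.C x, Polynomial.X] p

lemma pxP_eval (p : Poly2) (x y : ℝ) : (pxP p y).eval x = evalP p x y := by
  rw [pxP, evalP, ← Polynomial.coe_aeval_eq_eval]
  rw [show (Polynomial.aeval x ((MvPolynomial.aeval ![Polynomial.X, Polynomial.C y]) p) : ℝ)
      = MvPolynomial.aeval (fun i => Polynomial.aeval x (![Polynomial.X, Polynomial.C y] i)) p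
    from MvPolynomial.comp_aeval_apply _ _ _]
  have : (fun i => Polynomial.aeval x (![Polynomial.X, Polynomial.C y] i)) = ![x, y] := by
    funext i; fin_cases i <;> simp
  rw [this]
  rw [MvPolynomial.aeval_def, Algebra.algebraMap_self, MvPolynomial.eval]
  simp [MvPolynomial.coe_eval₂Hom]

lemma pyP_eval (p : Poly2) (x y : ℝ) : (pyP p x).eval y = evalP p x y := by
  rw [pyP, evalP, ← Polynomial.coe_aeval_eq_eval]
  rw [show (Polynomial.aeval y ((MvPolynomial.aeval ![Polynomial.C x, Polynomial.X]) p) : ℝ)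
      = MvPolynomial.aeval (fun i => Polynomial.aeval y (![Polynomial.C x, Polynomial.X] i)) p
    from MvPolynomial.comp_aeval_apply _ _ _]
  have : (fun i => Polynomial.aeval y (![Polynomial.C x, Polynomial.X] i)) = ![x, y] := by
    funext i; fin_cases i <;> simp
  rw [this]
  rw [MvPolynomial.aeval_def, Algebra.algebraMap_self, MvPolynomial.eval]
  simp [MvPolynomial.coe_eval₂Hom]

@[simp] lemma evalP_add (p q : Poly2) (x y : ℝ) :
    evalP (p + q) x y = evalP p x y + evalP q x y := map_add _ _ _
@[simp] lemma evalP_mul (p q : Poly2) (x y : ℝ) :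
    evalP (p * q) x y = evalP p x y * evalP q x y := map_mul _ _ _
@[simp] lemma evalP_sub (p q : Poly2) (x y : ℝ) :
    evalP (p - q) x y = evalP p x y - evalP q x y := map_sub _ _ _
@[simp] lemma evalP_neg (p : Poly2) (x y : ℝ) : evalP (-p) x y = -evalP p x y := map_neg _ _
@[simp] lemma evalP_zero (x y : ℝ) : evalP 0 x y = 0 := map_zero _
@[simp] lemma evalP_one (x y : ℝ) : evalP 1 x y = 1 := map_one _
@[simp] lemma evalP_pow (p : Poly2) (n : ℕ) (x y : ℝ) :
    evalP (p ^ n) x y = evalP p x y ^ n := map_pow _ _ _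
@[simp] lemma evalP_C (a : ℝ) (x y : ℝ) : evalP (C a) x y = a := by simp [evalP]
@[simp] lemma evalP_X0 (x y : ℝ) : evalP (X 0) x y = x := by simp [evalP]
@[simp] lemma evalP_X1 (x y : ℝ) : evalP (X 1) x y = y := by simp [evalP]
@[simp] lemma evalP_smul (a : ℝ) (p : Poly2) (x y : ℝ) :
    evalP (a • p) x y = a * evalP p x y := by
  rw [smul_eq_C_mul]; simp

lemma aeval_eq_evalP (p : Poly2) (x y : ℝ) : MvPolynomial.aeval ![x, y] p = evalP p x y := by
  rw [MvPolynomial.aeval_def, Algebra.algebraMap_self, evalP, MvPolynomial.eval]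
  simp [MvPolynomial.coe_eval₂Hom]

@[simp] lemma evalP_aevalX1 (g : Polynomial ℝ) (x y : ℝ) :
    evalP (Polynomial.aeval (X 1 : Poly2) g) x y = g.eval y := by
  rw [← aeval_eq_evalP, ← Polynomial.aeval_algHom_apply]
  simp [Polynomial.coe_aeval_eq_eval]

@[simp] lemma evalP_aevalX0 (g : Polynomial ℝ) (x y : ℝ) :
    evalP (Polynomial.aeval (X 0 : Poly2) g) x y = g.eval x := by
  rw [← aeval_eq_evalP, ← Polynomial.aeval_algHom_apply]
  simp [Polynomial.coe_aeval_eq_eval]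

lemma pxP_derivative (p : Poly2) (y : ℝ) :
    (pxP p y).derivative = pxP (pderiv 0 p) y := by
  induction p using MvPolynomial.induction_on with
  | C a => simp [pxP]
  | add p q hp hq => simp only [pxP, map_add, Polynomial.derivative_add] at *; rw [hp, hq]
  | mul_X p i hp =>
      have h01 : pderiv 0 (X 1 : Poly2) = 0 := pderiv_X_of_ne (by decide)
      fin_cases i <;>
        simp [pxP, pderiv_mul, pderiv_X_self, h01, hp, mul_comm] at *

lemma pyP_derivative (p : Poly2) (x : ℝ) :
    (pyP p x).derivative = pyP (pderiv 1 p) x := by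
  induction p using MvPolynomial.induction_on with
  | C a => simp [pyP]
  | add p q hp hq => simp only [pyP, map_add, Polynomial.derivative_add] at *; rw [hp, hq]
  | mul_X p i hp =>
      have h10 : pderiv 1 (X 0 : Poly2) = 0 := pderiv_X_of_ne (by decide)
      fin_cases i <;>
        simp [pyP, pderiv_mul, pderiv_X_self, h10, hp, mul_comm] at *

open ContinuousLinearMap in
lemma hasFDerivAt_evalP (p : Poly2) (z : ℝ × ℝ) :
    HasFDerivAt (fun w : ℝ × ℝ => evalP p w.1 w.2)
      (evalP (pderiv 0 p) z.1 z.2 • ContinuousLinearMap.fst ℝ ℝ ℝ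
        + evalP (pderiv 1 p) z.1 z.2 • ContinuousLinearMap.snd ℝ ℝ ℝ) z := by
  induction p using MvPolynomial.induction_on with
  | C a =>
      have : (fun w : ℝ × ℝ => evalP (C a) w.1 w.2) = fun _ => a := by
        funext w; simp
      rw [this]
      simpa [zero_smul] using hasFDerivAt_const a z
  | add p q hp hq =>
      have : (fun w : ℝ × ℝ => evalP (p + q) w.1 w.2)
          = fun w => evalP p w.1 w.2 + evalP q w.1 w.2 := by funext w; simp
      rw [this]
      refine (hp.fun_add hq).congr_fderiv ?_
      simp only [map_add, evalP_add]
      module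
  | mul_X p i hp =>
      fin_cases i
      · show HasFDerivAt (fun w : ℝ × ℝ => evalP (p * X 0) w.1 w.2)
          (evalP (pderiv 0 (p * X 0)) z.1 z.2 • ContinuousLinearMap.fst ℝ ℝ ℝ
            + evalP (pderiv 1 (p * X 0)) z.1 z.2 • ContinuousLinearMap.snd ℝ ℝ ℝ) z
        have : (fun w : ℝ × ℝ => evalP (p * X 0) w.1 w.2)
            = fun w => evalP p w.1 w.2 * w.1 := by funext w; simp
        rw [this]
        refine (hp.fun_mul (hasFDerivAt_fst (𝕜 := ℝ) (p := z))).congr_fderiv ?_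
        have h01 : pderiv 0 (X 1 : Poly2) = 0 := pderiv_X_of_ne (by decide)
        refine ContinuousLinearMap.ext fun v => ?_
        simp [pderiv_mul, pderiv_X_self, h01]
        ring
      · show HasFDerivAt (fun w : ℝ × ℝ => evalP (p * X 1) w.1 w.2)
          (evalP (pderiv 0 (p * X 1)) z.1 z.2 • ContinuousLinearMap.fst ℝ ℝ ℝ
            + evalP (pderiv 1 (p * X 1)) z.1 z.2 • ContinuousLinearMap.snd ℝ ℝ ℝ) z
        have : (fun w : ℝ × ℝ => evalP (p * X 1) w.1 w.2)
            = fun w => evalP p w.1 w.2 * w.2 := by funext w; simp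
        rw [this]
        refine (hp.fun_mul (hasFDerivAt_snd (𝕜 := ℝ) (p := z))).congr_fderiv ?_
        have h10 : pderiv 1 (X 0 : Poly2) = 0 := pderiv_X_of_ne (by decide)
        refine ContinuousLinearMap.ext fun v => ?_
        simp [pderiv_mul, pderiv_X_self, h10]
        ring

lemma continuous_evalP (p : Poly2) : Continuous fun z : ℝ × ℝ => evalP p z.1 z.2 :=
  continuous_iff_continuousAt.2 fun z => (hasFDerivAt_evalP p z).differentiableAt.continuousAt

lemma continuous_evalP_x (p : Poly2) (y : ℝ) : Continuous fun x : ℝ => evalP p x y := by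
  have : (fun x : ℝ => evalP p x y) = fun x => (pxP p y).eval x := by
    funext x; rw [pxP_eval]
  rw [this]; exact (pxP p y).continuous

lemma continuous_evalP_y (p : Poly2) (x : ℝ) : Continuous fun y : ℝ => evalP p x y := by
  have : (fun y : ℝ => evalP p x y) = fun y => (pyP p x).eval y := by
    funext y; rw [pyP_eval]
  rw [this]; exact (pyP p x).continuous

lemma integrableOn_rect (f : ℝ × ℝ → ℝ) (hf : Continuous f) (x₀ x₁ y₀ y₁ : ℝ) :
    IntegrableOn f (Set.Icc x₀ x₁ ×ˢ Set.Icc y₀ y₁) := by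
  rw [Set.Icc_prod_Icc]
  exact hf.continuousOn.integrableOn_compact isCompact_Icc

/-- Divergence theorem for polynomial vector fields on the rectangle. -/
lemma divergenceP (p₁ p₂ : Poly2) {x₀ x₁ y₀ y₁ : ℝ} (hx : x₀ ≤ x₁) (hy : y₀ ≤ y₁) :
    ∫ z in Set.Icc x₀ x₁ ×ˢ Set.Icc y₀ y₁,
        (evalP (pderiv 0 p₁) z.1 z.2 + evalP (pderiv 1 p₂) z.1 z.2)
      = (((∫ x in x₀..x₁, evalP p₂ x y₁) - ∫ x in x₀..x₁, evalP p₂ x y₀)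
          + ∫ y in y₀..y₁, evalP p₁ x₁ y) - ∫ y in y₀..y₁, evalP p₁ x₀ y := by
  have Hi := integrableOn_rect
    (fun z => evalP (pderiv 0 p₁) z.1 z.2 + evalP (pderiv 1 p₂) z.1 z.2)
    ((continuous_evalP _).add (continuous_evalP _)) x₀ x₁ y₀ y₁
  rw [Set.Icc_prod_Icc] at Hi ⊢
  have := MeasureTheory.integral_divergence_prod_Icc_of_hasFDerivAt_off_countable_of_le
    (fun z => evalP p₁ z.1 z.2) (fun z => evalP p₂ z.1 z.2)
    (fun z => evalP (pderiv 0 p₁) z.1 z.2 • ContinuousLinearMap.fst ℝ ℝ ℝ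
        + evalP (pderiv 1 p₁) z.1 z.2 • ContinuousLinearMap.snd ℝ ℝ ℝ)
    (fun z => evalP (pderiv 0 p₂) z.1 z.2 • ContinuousLinearMap.fst ℝ ℝ ℝ
        + evalP (pderiv 1 p₂) z.1 z.2 • ContinuousLinearMap.snd ℝ ℝ ℝ)
    (x₀, y₀) (x₁, y₁) ⟨hx, hy⟩ ∅ Set.countable_empty
    (continuous_evalP p₁).continuousOn (continuous_evalP p₂).continuousOn
    (fun z _ => hasFDerivAt_evalP p₁ z) (fun z _ => hasFDerivAt_evalP p₂ z)
    ?_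
  · simpa using this
  · simpa using Hi

lemma infinite_of_null_diff {a b : ℝ} (hab : a < b) {s : Set ℝ}
    (h : volume (Set.Ioc a b \ s) = 0) : s.Infinite := by
  intro hfin
  have h1 : volume (Set.Ioc a b) ≤ volume (Set.Ioc a b \ s) + volume s :=
    (measure_mono (by intro t ht; by_cases hts : t ∈ s <;> simp [ht, hts])).trans
      (measure_union_le _ _)
  rw [h, hfin.measure_zero, add_zero, Real.volume_Ioc, nonpos_iff_eq_zero] at h1
  exact (ENNReal.ofReal_pos.2 (sub_pos.2 hab)).ne' h1

lemma poly1_zero_of_null {a b : ℝ} (hab : a < b) (u : Polynomial ℝ)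
    (h : volume (Set.Ioc a b \ {t | u.eval t = 0}) = 0) : u = 0 :=
  u.eq_zero_of_infinite_isRoot (infinite_of_null_diff hab h)

lemma poly1_zero_of_integral_sq_zero {a b : ℝ} (hab : a < b) (u : Polynomial ℝ)
    (h : (∫ t in a..b, (u.eval t)^2) = 0) : u = 0 := by
  rw [intervalIntegral.integral_of_le hab.le] at h
  have hint : IntegrableOn (fun t => (u.eval t)^2) (Set.Ioc a b) :=
    (u.continuous.pow 2).integrableOn_Ioc
  have hae := (MeasureTheory.integral_eq_zero_iff_of_nonneg
    (fun t => sq_nonneg (u.eval t)) hint).1 h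
  refine poly1_zero_of_null hab u ?_
  have hnull : volume.restrict (Set.Ioc a b) {t | (u.eval t)^2 ≠ 0} = 0 := hae
  rw [Measure.restrict_apply' measurableSet_Ioc] at hnull
  refine measure_mono_null (fun t ht => ?_) hnull
  obtain ⟨ht1, ht2⟩ := ht
  exact ⟨by simpa using pow_ne_zero 2 ht2, ht1⟩

lemma poly2_zero_of_zero_on {s t : Set ℝ} (hs : s.Infinite) (ht : t.Infinite) (U : Poly2)
    (h : ∀ x ∈ s, ∀ y ∈ t, evalP U x y = 0) : ∀ x y, evalP U x y = 0 := by
  have hx : ∀ x ∈ s, ∀ y, evalP U x y = 0 := by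
    intro x hxs y
    have : pyP U x = 0 := (pyP U x).eq_zero_of_infinite_isRoot
      (ht.mono fun y hyt => show (pyP U x).IsRoot y by
        rw [Polynomial.IsRoot, pyP_eval]; exact h x hxs y hyt)
    rw [← pyP_eval, this, Polynomial.eval_zero]
  intro x y
  have : pxP U y = 0 := (pxP U y).eq_zero_of_infinite_isRoot
    (hs.mono fun x' hx' => show (pxP U y).IsRoot x' by
      rw [Polynomial.IsRoot, pxP_eval]; exact hx x' hx' y)
  rw [← pxP_eval, this, Polynomial.eval_zero]

lemma poly2_zero_of_null_rect {x₀ x₁ y₀ y₁ : ℝ} (hx : x₀ < x₁) (hy : y₀ < y₁) (U : Poly2)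
    (h : volume ({z : ℝ × ℝ | evalP U z.1 z.2 ≠ 0} ∩ (Set.Ioc x₀ x₁ ×ˢ Set.Ioc y₀ y₁)) = 0) :
    ∀ x y, evalP U x y = 0 := by
  set s : Set (ℝ × ℝ) := {z : ℝ × ℝ | evalP U z.1 z.2 ≠ 0} ∩ (Set.Ioc x₀ x₁ ×ˢ Set.Ioc y₀ y₁)
    with hs_def
  have hmeas : MeasurableSet s :=
    ((isOpen_compl_singleton.preimage (continuous_evalP U)).measurableSet).inter
      (measurableSet_Ioc.prod measurableSet_Ioc)
  rw [show (volume : Measure (ℝ × ℝ)) = (volume : Measure ℝ).prod volume from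
      (MeasureTheory.Measure.volume_eq_prod ℝ ℝ)] at h
  have hslice := (MeasureTheory.Measure.measure_prod_null hmeas).1 h
  set G : Set ℝ := {x | ∀ y, evalP U x y = 0} with hG_def
  have hGsub : {x | volume (Prod.mk x ⁻¹' s) = 0} ∩ Set.Ioc x₀ x₁ ⊆ G := by
    intro x ⟨hxnull, hxI⟩
    intro y
    have hpy : pyP U x = 0 := by
      refine poly1_zero_of_null hy (pyP U x) (measure_mono_null ?_ hxnull)
      intro y' ⟨hy'I, hy'ne⟩
      refine ⟨?_, hxI, hy'I⟩
      show evalP U x y' ≠ 0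
      rw [← pyP_eval]
      exact hy'ne
    rw [← pyP_eval, hpy, Polynomial.eval_zero]
  have hGinf : G.Infinite := by
    refine infinite_of_null_diff hx (measure_mono_null ?_ (ae_iff.1 hslice))
    intro x ⟨hxI, hxG⟩
    simp only [Set.mem_setOf_eq, Pi.zero_apply]
    intro hnull
    exact hxG (hGsub ⟨hnull, hxI⟩)
  intro x y
  have : pxP U y = 0 := (pxP U y).eq_zero_of_infinite_isRoot
    (hGinf.mono fun x' hx' => show (pxP U y).IsRoot x' by
      rw [Polynomial.IsRoot, pxP_eval]; exact hx' y)
  rw [← pxP_eval, this, Polynomial.eval_zero]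

lemma evalP_const_of_pderiv_zero (p : Poly2)
    (h0 : ∀ x y, evalP (pderiv 0 p) x y = 0) (h1 : ∀ x y, evalP (pderiv 1 p) x y = 0) :
    ∀ x y, evalP p x y = evalP p 0 0 := by
  have key0 : ∀ y x, evalP p x y = evalP p 0 y := by
    intro y x
    have hd : (pxP p y).derivative = 0 := by
      rw [pxP_derivative]
      exact Polynomial.funext fun r => by rw [pxP_eval, h0, Polynomial.eval_zero]
    have hc := Polynomial.eq_C_of_derivative_eq_zero hd
    rw [← pxP_eval, ← pxP_eval, hc]; simp
  have key1 : ∀ y, evalP p 0 y = evalP p 0 0 := by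
    intro y
    have hd : (pyP p 0).derivative = 0 := by
      rw [pyP_derivative]
      exact Polynomial.funext fun r => by rw [pyP_eval, h1, Polynomial.eval_zero]
    have hc := Polynomial.eq_C_of_derivative_eq_zero hd
    rw [← pyP_eval, ← pyP_eval, hc]; simp
  intro x y; rw [key0 y x, key1 y]

lemma totalDegree_aeval_X_le (g : Polynomial ℝ) (i : Fin 2) :
    (Polynomial.aeval (X i : Poly2) g).totalDegree ≤ g.natDegree := by
  rw [Polynomial.aeval_eq_sum_range]
  refine (totalDegree_finset_sum _ _).trans (Finset.sup_le fun k hk => ?_)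
  refine (totalDegree_smul_le _ _).trans ?_
  refine (totalDegree_pow _ _).trans ?_
  rw [totalDegree_X]
  have := Finset.mem_range.1 hk
  omega

lemma totalDegree_pderiv_le (i : Fin 2) (p : Poly2) :
    (pderiv i p).totalDegree ≤ p.totalDegree - 1 := by
  conv_lhs => rw [p.as_sum]
  rw [map_sum]
  refine (totalDegree_finset_sum _ _).trans (Finset.sup_le fun s hs => ?_)
  rw [pderiv_monomial]
  by_cases h : s i = 0
  · simp [h]
  · refine (totalDegree_monomial_le _ _).trans ?_
    have hle : (s.sum fun _ e => e) ≤ p.totalDegree := le_totalDegree hs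
    have hsum : ∀ t : Fin 2 →₀ ℕ, (t.sum fun _ e => e) = t 0 + t 1 := by
      intro t; rw [Finsupp.sum_fintype _ _ (fun _ => rfl), Fin.sum_univ_two]
    rw [hsum] at hle
    have h2 := hsum (s - Finsupp.single i 1)
    refine le_trans (le_of_eq h2) ?_
    have e0 := Finsupp.tsub_apply s (Finsupp.single i 1) (0 : Fin 2)
    have e1 := Finsupp.tsub_apply s (Finsupp.single i 1) (1 : Fin 2)
    rw [e0, e1]
    fin_cases i <;> simp_all [Finsupp.single_apply] <;> omega

lemma pderiv_eq_zero_of_totalDegree_zero (i : Fin 2) (p : Poly2) (h : p.totalDegree = 0) :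
    pderiv i p = 0 := by
  conv_lhs => rw [p.as_sum]
  rw [map_sum]
  refine Finset.sum_eq_zero fun s hs => ?_
  rw [pderiv_monomial]
  have := ((totalDegree_eq_zero_iff _ p).1 h) s hs i
  simp [this]

lemma td_X_sub_C (i : Fin 2) (a : ℝ) : (X i - C a : Poly2).totalDegree ≤ 1 := by
  rw [sub_eq_add_neg, ← C_neg]
  exact (totalDegree_add _ _).trans (by simp [totalDegree_X, totalDegree_C])

lemma poly1_zero_of_orth {a b : ℝ} (hab : a < b) (u : Polynomial ℝ) {n : ℕ}
    (hdeg : u.natDegree ≤ n)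
    (horth : ∀ k ≤ n, (∫ t in a..b, u.eval t * t ^ k) = 0) : u = 0 := by
  have hrw : (fun t : ℝ => (u.eval t)^2)
      = fun t => ∑ k ∈ Finset.range (n+1), u.coeff k * (u.eval t * t ^ k) := by
    funext t
    have hev : u.eval t = ∑ k ∈ Finset.range (n+1), u.coeff k * t ^ k :=
      Polynomial.eval_eq_sum_range' (Nat.lt_succ_of_le hdeg) t
    calc (u.eval t)^2 = (∑ k ∈ Finset.range (n+1), u.coeff k * t ^ k) * u.eval t := by
          rw [← hev, sq]
    _ = ∑ k ∈ Finset.range (n+1), u.coeff k * (u.eval t * t ^ k) := by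
          rw [Finset.sum_mul]; exact Finset.sum_congr rfl fun k _ => by ring
  have hsq : (∫ t in a..b, (u.eval t)^2) = 0 := by
    rw [hrw, intervalIntegral.integral_finset_sum (fun k _ =>
      ((continuous_const.fun_mul (u.continuous.fun_mul (continuous_pow k))).intervalIntegrable a b))]
    simp_rw [intervalIntegral.integral_const_mul]
    exact Finset.sum_eq_zero fun k hk => by
      rw [horth k (Nat.lt_succ_iff.1 (Finset.mem_range.1 hk)), mul_zero]
  exact poly1_zero_of_integral_sq_zero hab u hsq

lemma split_int {a b : ℝ} (u : Polynomial ℝ) (c : ℝ) (f : ℝ → ℝ) (hf : Continuous f) :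
    (∫ t in a..b, (u.eval t - c) * f t)
      = (∫ t in a..b, u.eval t * f t) - c * ∫ t in a..b, f t := by
  rw [← intervalIntegral.integral_const_mul, ← intervalIntegral.integral_sub
    ((u.continuous.fun_mul hf).intervalIntegrable _ _)
    ((continuous_const.fun_mul hf).intervalIntegrable _ _)]
  congr 1; funext t; ring

def Ffun (x₀ x₁ y₀ y₁ : ℝ) (v₀ : Poly2) (vb₁ vb₂ vb₃ vb₄ : Polynomial ℝ)
    (q : Poly2 × Poly2) : ℝ :=
  -(∫ z in Set.Icc x₀ x₁ ×ˢ Set.Icc y₀ y₁, evalP v₀ z.1 z.2 * evalP (divP q) z.1 z.2)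
    + ((∫ y in y₀..y₁, vb₁.eval y * (-(evalP q.1 x₀ y)))
      + (∫ y in y₀..y₁, vb₂.eval y * evalP q.1 x₁ y)
      + (∫ x in x₀..x₁, vb₃.eval x * (-(evalP q.2 x y₀)))
      + (∫ x in x₀..x₁, vb₄.eval x * evalP q.2 x y₁))

lemma F_eq_W {x₀ x₁ y₀ y₁ : ℝ} (hx : x₀ ≤ x₁) (hy : y₀ ≤ y₁)
    (v₀ : Poly2) (vb₁ vb₂ vb₃ vb₄ : Polynomial ℝ) (c : ℝ)
    (hc : ∀ z ∈ Set.Icc x₀ x₁ ×ˢ Set.Icc y₀ y₁, evalP v₀ z.1 z.2 = c)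
    (q : Poly2 × Poly2) :
    Ffun x₀ x₁ y₀ y₁ v₀ vb₁ vb₂ vb₃ vb₄ q
      = (∫ y in y₀..y₁, (vb₁.eval y - c) * (-(evalP q.1 x₀ y)))
        + (∫ y in y₀..y₁, (vb₂.eval y - c) * evalP q.1 x₁ y)
        + (∫ x in x₀..x₁, (vb₃.eval x - c) * (-(evalP q.2 x y₀)))
        + (∫ x in x₀..x₁, (vb₄.eval x - c) * evalP q.2 x y₁) := by
  have h1 : (∫ z in Set.Icc x₀ x₁ ×ˢ Set.Icc y₀ y₁,
        evalP v₀ z.1 z.2 * evalP (divP q) z.1 z.2)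
      = c * ((((∫ x in x₀..x₁, evalP q.2 x y₁) - ∫ x in x₀..x₁, evalP q.2 x y₀)
          + ∫ y in y₀..y₁, evalP q.1 x₁ y) - ∫ y in y₀..y₁, evalP q.1 x₀ y) := by
    rw [← divergenceP q.1 q.2 hx hy, ← MeasureTheory.integral_const_mul]
    refine MeasureTheory.setIntegral_congr_fun (measurableSet_Icc.prod measurableSet_Icc) ?_
    intro z hz
    show evalP v₀ z.1 z.2 * evalP (divP q) z.1 z.2 = _
    rw [hc z hz]
    simp [divP]
  rw [Ffun, h1]
  rw [split_int vb₁ c _ ((continuous_evalP_y q.1 x₀).fun_neg),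
    split_int vb₂ c _ (continuous_evalP_y q.1 x₁),
    split_int vb₃ c _ ((continuous_evalP_x q.2 y₀).fun_neg),
    split_int vb₄ c _ (continuous_evalP_x q.2 y₁),
    intervalIntegral.integral_neg, intervalIntegral.integral_neg]
  ring

set_option maxHeartbeats 1000000 in
lemma v0_const {x₀ x₁ y₀ y₁ : ℝ} (hx : x₀ < x₁) (hy : y₀ < y₁) {j : ℕ} (v₀ : Poly2)
    (hv₀ : memP j v₀) (vb₁ vb₂ vb₃ vb₄ : Polynomial ℝ)
    (H : ∀ q, memBDM j q → Ffun x₀ x₁ y₀ y₁ v₀ vb₁ vb₂ vb₃ vb₄ q = 0) :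
    ∀ x y, evalP v₀ x y = evalP v₀ 0 0 := by
  classical
  set R₁ : Poly2 := pderiv 0 v₀ with hR₁
  set R₂ : Poly2 := pderiv 1 v₀ with hR₂
  set q1 : Poly2 × Poly2 := ((X 0 - C x₀) * ((X 0 - C x₁) * R₁),
    (X 1 - C y₀) * ((X 1 - C y₁) * R₂)) with hq1
  set rect : Set (ℝ × ℝ) := Set.Icc x₀ x₁ ×ˢ Set.Icc y₀ y₁ with hrect
  have hrectmeas : MeasurableSet rect := measurableSet_Icc.prod measurableSet_Icc
  have hint : ∀ (p : Poly2), IntegrableOn (fun z : ℝ × ℝ => evalP p z.1 z.2) rect :=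
    fun p => integrableOn_rect _ (continuous_evalP p) _ _ _ _
  -- membership
  have hmem : memBDM j q1 := by
    refine ⟨q1.1, q1.2, 0, 0, ?_, ?_, by simp, by simp⟩
    · rcases Nat.eq_zero_or_pos j with hj | hj
      · have hz : R₁ = 0 := pderiv_eq_zero_of_totalDegree_zero 0 v₀
          (Nat.le_zero.1 (by rw [hj] at hv₀; exact hv₀))
        show ((X 0 - C x₀) * ((X 0 - C x₁) * R₁)).totalDegree ≤ j + 1
        rw [hz, mul_zero, mul_zero, totalDegree_zero]
        omega
      · show ((X 0 - C x₀) * ((X 0 - C x₁) * R₁)).totalDegree ≤ j + 1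
        have b1 := totalDegree_mul (X 0 - C x₀ : Poly2) ((X 0 - C x₁) * R₁)
        have b2 := totalDegree_mul (X 0 - C x₁ : Poly2) R₁
        have b3 := totalDegree_pderiv_le 0 v₀
        have b4 := td_X_sub_C 0 x₀
        have b5 := td_X_sub_C 0 x₁
        have b6 : v₀.totalDegree ≤ j := hv₀
        rw [← hR₁] at b3
        omega
    · rcases Nat.eq_zero_or_pos j with hj | hj
      · have hz : R₂ = 0 := pderiv_eq_zero_of_totalDegree_zero 1 v₀
          (Nat.le_zero.1 (by rw [hj] at hv₀; exact hv₀))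
        show ((X 1 - C y₀) * ((X 1 - C y₁) * R₂)).totalDegree ≤ j + 1
        rw [hz, mul_zero, mul_zero, totalDegree_zero]
        omega
      · show ((X 1 - C y₀) * ((X 1 - C y₁) * R₂)).totalDegree ≤ j + 1
        have b1 := totalDegree_mul (X 1 - C y₀ : Poly2) ((X 1 - C y₁) * R₂)
        have b2 := totalDegree_mul (X 1 - C y₁ : Poly2) R₂
        have b3 := totalDegree_pderiv_le 1 v₀
        have b4 := td_X_sub_C 1 y₀
        have b5 := td_X_sub_C 1 y₁
        have b6 : v₀.totalDegree ≤ j := hv₀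
        rw [← hR₂] at b3
        omega
  have hF := H q1 hmem
  rw [Ffun] at hF
  -- boundary terms vanish
  have hb1 : (∫ y in y₀..y₁, vb₁.eval y * (-(evalP q1.1 x₀ y))) = 0 := by
    have h0 : ∀ y, vb₁.eval y * (-(evalP q1.1 x₀ y)) = 0 := fun y => by
      show vb₁.eval y * (-(evalP ((X 0 - C x₀) * ((X 0 - C x₁) * R₁)) x₀ y)) = 0
      simp
    simp_rw [h0, intervalIntegral.integral_zero]
  have hb2 : (∫ y in y₀..y₁, vb₂.eval y * evalP q1.1 x₁ y) = 0 := by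
    have h0 : ∀ y, vb₂.eval y * evalP q1.1 x₁ y = 0 := fun y => by
      show vb₂.eval y * evalP ((X 0 - C x₀) * ((X 0 - C x₁) * R₁)) x₁ y = 0
      simp
    simp_rw [h0, intervalIntegral.integral_zero]
  have hb3 : (∫ x in x₀..x₁, vb₃.eval x * (-(evalP q1.2 x y₀))) = 0 := by
    have h0 : ∀ x, vb₃.eval x * (-(evalP q1.2 x y₀)) = 0 := fun x => by
      show vb₃.eval x * (-(evalP ((X 1 - C y₀) * ((X 1 - C y₁) * R₂)) x y₀)) = 0
      simp
    simp_rw [h0, intervalIntegral.integral_zero]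
  have hb4 : (∫ x in x₀..x₁, vb₄.eval x * evalP q1.2 x y₁) = 0 := by
    have h0 : ∀ x, vb₄.eval x * evalP q1.2 x y₁ = 0 := fun x => by
      show vb₄.eval x * evalP ((X 1 - C y₀) * ((X 1 - C y₁) * R₂)) x y₁ = 0
      simp
    simp_rw [h0, intervalIntegral.integral_zero]
  rw [hb1, hb2, hb3, hb4] at hF
  -- integration by parts
  set W : Poly2 := R₁ * q1.1 + R₂ * q1.2 with hW
  have hpoly : v₀ * divP q1 = (pderiv 0 (v₀ * q1.1) + pderiv 1 (v₀ * q1.2)) - W := by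
    rw [hW, hq1, divP]
    simp only [pderiv_mul, ← hR₁, ← hR₂]
    ring
  have hsplit : (∫ z in rect, evalP v₀ z.1 z.2 * evalP (divP q1) z.1 z.2)
      = (∫ z in rect, (evalP (pderiv 0 (v₀ * q1.1)) z.1 z.2
          + evalP (pderiv 1 (v₀ * q1.2)) z.1 z.2))
        - ∫ z in rect, evalP W z.1 z.2 := by
    have hcongr : (∫ z in rect, evalP v₀ z.1 z.2 * evalP (divP q1) z.1 z.2)
        = ∫ z in rect, ((evalP (pderiv 0 (v₀ * q1.1)) z.1 z.2
            + evalP (pderiv 1 (v₀ * q1.2)) z.1 z.2) - evalP W z.1 z.2) := by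
      refine MeasureTheory.setIntegral_congr_fun hrectmeas fun z _ => ?_
      show evalP v₀ z.1 z.2 * evalP (divP q1) z.1 z.2 = _
      rw [← evalP_mul, hpoly]
      simp
    exact hcongr.trans (MeasureTheory.integral_sub
      ((hint (pderiv 0 (v₀ * q1.1))).add (hint (pderiv 1 (v₀ * q1.2)))) (hint W))
  have hdiv0 : (∫ z in rect, (evalP (pderiv 0 (v₀ * q1.1)) z.1 z.2
      + evalP (pderiv 1 (v₀ * q1.2)) z.1 z.2)) = 0 := by
    rw [hrect, divergenceP (v₀ * q1.1) (v₀ * q1.2) hx.le hy.le]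
    have e1 : ∀ y, evalP (v₀ * q1.1) x₀ y = 0 := fun y => by
      show evalP (v₀ * ((X 0 - C x₀) * ((X 0 - C x₁) * R₁))) x₀ y = 0; simp
    have e2 : ∀ y, evalP (v₀ * q1.1) x₁ y = 0 := fun y => by
      show evalP (v₀ * ((X 0 - C x₀) * ((X 0 - C x₁) * R₁))) x₁ y = 0; simp
    have e3 : ∀ x, evalP (v₀ * q1.2) x y₀ = 0 := fun x => by
      show evalP (v₀ * ((X 1 - C y₀) * ((X 1 - C y₁) * R₂))) x y₀ = 0; simp
    have e4 : ∀ x, evalP (v₀ * q1.2) x y₁ = 0 := fun x => by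
      show evalP (v₀ * ((X 1 - C y₀) * ((X 1 - C y₁) * R₂))) x y₁ = 0; simp
    simp_rw [e1, e2, e3, e4, intervalIntegral.integral_zero]
    ring
  rw [hsplit, hdiv0] at hF
  have hWint : (∫ z in rect, evalP W z.1 z.2) = 0 := by linarith
  -- sign of W on rect
  have hWnonpos : ∀ z ∈ rect, evalP W z.1 z.2 ≤ 0 := by
    rintro ⟨x, y⟩ hz
    obtain ⟨⟨hx0, hx1⟩, ⟨hy0, hy1⟩⟩ := hz
    show evalP W x y ≤ 0
    rw [hW, hq1]
    simp only [evalP_add, evalP_mul, evalP_sub, evalP_X0, evalP_X1, evalP_C]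
    nlinarith [mul_nonneg (mul_nonneg (sub_nonneg.2 hx0) (sub_nonneg.2 hx1))
        (sq_nonneg (evalP R₁ x y)),
      mul_nonneg (mul_nonneg (sub_nonneg.2 hy0) (sub_nonneg.2 hy1))
        (sq_nonneg (evalP R₂ x y))]
  -- a.e. vanishing of W on the rectangle, hence everywhere
  have hWzero : ∀ x y, evalP W x y = 0 := by
    have hnn : 0 ≤ᵐ[volume.restrict rect] fun z : ℝ × ℝ => -evalP W z.1 z.2 :=
      (ae_restrict_iff' hrectmeas).2 (ae_of_all _ fun z hz => neg_nonneg.2 (hWnonpos z hz))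
    have hii : Integrable (fun z : ℝ × ℝ => -evalP W z.1 z.2) (volume.restrict rect) :=
      (hint W).neg
    have hzero : (∫ z in rect, -evalP W z.1 z.2) = 0 := by
      rw [MeasureTheory.integral_neg, hWint, neg_zero]
    have hae := (MeasureTheory.integral_eq_zero_iff_of_nonneg_ae hnn hii).1 hzero
    have hnull : volume ({z : ℝ × ℝ | evalP W z.1 z.2 ≠ 0} ∩ rect) = 0 := by
      have h1 := ae_iff.1 hae
      rw [Measure.restrict_apply' hrectmeas] at h1
      refine measure_mono_null (fun z hz => ?_) h1
      exact ⟨by simpa using hz.1, hz.2⟩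
    refine poly2_zero_of_null_rect hx hy W (measure_mono_null ?_ hnull)
    exact Set.inter_subset_inter_right _
      (Set.prod_mono Set.Ioc_subset_Icc_self Set.Ioc_subset_Icc_self)
  -- interior vanishing of the gradient
  have hR1zero : ∀ x y, evalP R₁ x y = 0 := by
    refine poly2_zero_of_zero_on (Set.Ioo_infinite hx) (Set.Ioo_infinite hy) R₁ ?_
    intro x hxm y hym
    obtain ⟨hx0, hx1⟩ := hxm
    obtain ⟨hy0, hy1⟩ := hym
    have hWxy := hWzero x y
    rw [hW, hq1] at hWxy
    simp only [evalP_add, evalP_mul, evalP_sub, evalP_X0, evalP_X1, evalP_C] at hWxy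
    have h1 : (x - x₀) * ((x - x₁) * evalP R₁ x y) * evalP R₁ x y ≤ 0 := by
      nlinarith [mul_nonneg (mul_nonneg (sub_nonneg.2 hx0.le) (sub_nonneg.2 hx1.le))
        (sq_nonneg (evalP R₁ x y))]
    have h2 : (y - y₀) * ((y - y₁) * evalP R₂ x y) * evalP R₂ x y ≤ 0 := by
      nlinarith [mul_nonneg (mul_nonneg (sub_nonneg.2 hy0.le) (sub_nonneg.2 hy1.le))
        (sq_nonneg (evalP R₂ x y))]
    have h3 : (x - x₀) * ((x - x₁) * evalP R₁ x y) * evalP R₁ x y = 0 := by linarith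
    by_contra hr
    nlinarith [mul_pos (mul_pos (sub_pos.2 hx0) (sub_pos.2 hx1)) (mul_self_pos.2 hr)]
  have hR2zero : ∀ x y, evalP R₂ x y = 0 := by
    refine poly2_zero_of_zero_on (Set.Ioo_infinite hx) (Set.Ioo_infinite hy) R₂ ?_
    intro x hxm y hym
    obtain ⟨hx0, hx1⟩ := hxm
    obtain ⟨hy0, hy1⟩ := hym
    have hWxy := hWzero x y
    rw [hW, hq1] at hWxy
    simp only [evalP_add, evalP_mul, evalP_sub, evalP_X0, evalP_X1, evalP_C] at hWxy
    have h1 : (x - x₀) * ((x - x₁) * evalP R₁ x y) * evalP R₁ x y ≤ 0 := by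
      nlinarith [mul_nonneg (mul_nonneg (sub_nonneg.2 hx0.le) (sub_nonneg.2 hx1.le))
        (sq_nonneg (evalP R₁ x y))]
    have h2 : (y - y₀) * ((y - y₁) * evalP R₂ x y) * evalP R₂ x y ≤ 0 := by
      nlinarith [mul_nonneg (mul_nonneg (sub_nonneg.2 hy0.le) (sub_nonneg.2 hy1.le))
        (sq_nonneg (evalP R₂ x y))]
    have h3 : (y - y₀) * ((y - y₁) * evalP R₂ x y) * evalP R₂ x y = 0 := by linarith
    by_contra hr
    nlinarith [mul_pos (mul_pos (sub_pos.2 hy0) (sub_pos.2 hy1)) (mul_self_pos.2 hr)]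
  exact evalP_const_of_pderiv_zero v₀ hR1zero hR2zero

lemma intZero {a b : ℝ} (f : ℝ → ℝ) (h : ∀ t, f t = 0) : (∫ t in a..b, f t) = 0 := by
  rw [show f = fun _ => 0 from funext h]
  exact intervalIntegral.integral_zero

lemma intScale {a b k : ℝ} (f g : ℝ → ℝ) (h : ∀ t, f t = k * g t) :
    (∫ t in a..b, f t) = k * ∫ t in a..b, g t := by
  rw [show f = fun t => k * g t from funext h, intervalIntegral.integral_const_mul]

@[simp] lemma evalP_natCast (n : ℕ) (x y : ℝ) : evalP (n : Poly2) x y = n := by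
  simp [evalP]

@[simp] lemma evalP_two (x y : ℝ) : evalP (2 : Poly2) x y = 2 :=
  map_ofNat (MvPolynomial.eval ![x, y]) 2

lemma evalC1a (j : ℕ) (x y : ℝ) :
    evalP ((curlP (X 0 ^ (j+2) * X 1)).1) x y = -(x^(j+2)) := by
  have h10 : pderiv 1 (X 0 : Poly2) = 0 := pderiv_X_of_ne (by decide)
  simp [curlP, pderiv_mul, pderiv_pow, h10, pderiv_X_self]

lemma evalC1b (j : ℕ) (x y : ℝ) :
    evalP ((curlP (X 0 ^ (j+2) * X 1)).2) x y = ((j:ℝ)+2) * (x^(j+1) * y) := by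
  have h01 : pderiv 0 (X 1 : Poly2) = 0 := pderiv_X_of_ne (by decide)
  simp [curlP, pderiv_mul, pderiv_pow, h01, pderiv_X_self]
  push_cast
  ring

lemma evalC2a (j : ℕ) (x y : ℝ) :
    evalP ((curlP (X 0 * X 1 ^ (j+2))).1) x y = -(((j:ℝ)+2) * (y^(j+1) * x)) := by
  have h10 : pderiv 1 (X 0 : Poly2) = 0 := pderiv_X_of_ne (by decide)
  simp [curlP, pderiv_mul, pderiv_pow, h10, pderiv_X_self]
  push_cast
  ring

lemma evalC2b (j : ℕ) (x y : ℝ) :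
    evalP ((curlP (X 0 * X 1 ^ (j+2))).2) x y = y^(j+2) := by
  have h01 : pderiv 0 (X 1 : Poly2) = 0 := pderiv_X_of_ne (by decide)
  simp [curlP, pderiv_mul, pderiv_pow, h01, pderiv_X_self]


set_option maxHeartbeats 2000000

/-- On the rectangle `K = [x₀,x₁] × [y₀,y₁]`, for `v₀ ∈ P_j` and edge
polynomials `v_{b,m}` of degree `≤ j+1`, the weak gradient functional
`q ↦ -∫_K v₀ div q + ∑_m ∫_{F_m} v_{b,m} (q·n_m)` vanishes on all of `BDM_{j+1}(K)` iff
`v₀` and all the `v_{b,m}` are the same constant on `K` and its edges. -/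
theorem statement1 (j : ℕ) (x₀ x₁ y₀ y₁ : ℝ) (hx : x₀ < x₁) (hy : y₀ < y₁)
    (v₀ : Poly2) (hv₀ : memP j v₀)
    (vb₁ vb₂ vb₃ vb₄ : Polynomial ℝ)
    (h₁ : vb₁.natDegree ≤ j + 1) (h₂ : vb₂.natDegree ≤ j + 1)
    (h₃ : vb₃.natDegree ≤ j + 1) (h₄ : vb₄.natDegree ≤ j + 1) :
    (∀ q : Poly2 × Poly2, memBDM j q →
      (-(∫ z in Set.Icc x₀ x₁ ×ˢ Set.Icc y₀ y₁, evalP v₀ z.1 z.2 * evalP (divP q) z.1 z.2)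
        + ((∫ y in y₀..y₁, vb₁.eval y * (-(evalP q.1 x₀ y)))
          + (∫ y in y₀..y₁, vb₂.eval y * evalP q.1 x₁ y)
          + (∫ x in x₀..x₁, vb₃.eval x * (-(evalP q.2 x y₀)))
          + (∫ x in x₀..x₁, vb₄.eval x * evalP q.2 x y₁)) = 0))
    ↔ (∃ c : ℝ, (∀ x y, (x, y) ∈ Set.Icc x₀ x₁ ×ˢ Set.Icc y₀ y₁ → evalP v₀ x y = c)
        ∧ (∀ y ∈ Set.Icc y₀ y₁, vb₁.eval y = c)
        ∧ (∀ y ∈ Set.Icc y₀ y₁, vb₂.eval y = c)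
        ∧ (∀ x ∈ Set.Icc x₀ x₁, vb₃.eval x = c)
        ∧ (∀ x ∈ Set.Icc x₀ x₁, vb₄.eval x = c)) := by
  constructor
  · intro H
    have H' : ∀ q, memBDM j q → Ffun x₀ x₁ y₀ y₁ v₀ vb₁ vb₂ vb₃ vb₄ q = 0 :=
      fun q hq => H q hq
    have hc0 := v0_const hx hy v₀ hv₀ vb₁ vb₂ vb₃ vb₄ H'
    set c := evalP v₀ 0 0 with hcdef
    have hcK : ∀ z ∈ Set.Icc x₀ x₁ ×ˢ Set.Icc y₀ y₁, evalP v₀ z.1 z.2 = c :=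
      fun z _ => hc0 z.1 z.2
    have hWq : ∀ A B : Poly2, memBDM j (A, B) →
        (∫ y in y₀..y₁, (vb₁.eval y - c) * (-(evalP A x₀ y)))
          + (∫ y in y₀..y₁, (vb₂.eval y - c) * evalP A x₁ y)
          + (∫ x in x₀..x₁, (vb₃.eval x - c) * (-(evalP B x y₀)))
          + (∫ x in x₀..x₁, (vb₄.eval x - c) * evalP B x y₁) = 0 := by
      intro A B hq
      have hFW := F_eq_W hx.le hy.le v₀ vb₁ vb₂ vb₃ vb₄ c hcK (A, B)
      rw [show Ffun x₀ x₁ y₀ y₁ v₀ vb₁ vb₂ vb₃ vb₄ (A, B) = 0 from H' (A, B) hq] at hFW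
      exact hFW.symm
    have hnex : x₁ - x₀ ≠ 0 := sub_ne_zero.2 hx.ne'
    have hney : y₁ - y₀ ≠ 0 := sub_ne_zero.2 hy.ne'
    have hXpow : ∀ (i : Fin 2) (k : ℕ), (X i ^ k : Poly2).totalDegree ≤ k :=
      fun i k => (totalDegree_pow _ _).trans (by rw [totalDegree_X]; omega)
    -- orthogonality to monomials of degree ≤ j
    have horth1 : ∀ k, k ≤ j → (∫ y in y₀..y₁, (vb₁.eval y - c) * y ^ k) = 0 := by
      intro k hk
      have hmem : memBDM j ((X 0 - C x₁) * X 1 ^ k, 0) := by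
        refine ⟨(X 0 - C x₁) * X 1 ^ k, 0, 0, 0, ?_, ?_, by simp, by simp⟩
        · show ((X 0 - C x₁) * X 1 ^ k : Poly2).totalDegree ≤ j + 1
          have b1 := totalDegree_mul (X 0 - C x₁ : Poly2) (X 1 ^ k)
          have b2 := td_X_sub_C 0 x₁
          have b3 := hXpow 1 k
          omega
        · show (0 : Poly2).totalDegree ≤ j + 1
          simp
      have hw := hWq _ _ hmem
      have i1 : (∫ y in y₀..y₁, (vb₁.eval y - c) * (-(evalP ((X 0 - C x₁) * X 1 ^ k) x₀ y)))
          = (x₁ - x₀) * ∫ y in y₀..y₁, (vb₁.eval y - c) * y ^ k :=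
        intScale _ _ fun y => by simp; ring
      have i2 : (∫ y in y₀..y₁, (vb₂.eval y - c) * evalP ((X 0 - C x₁) * X 1 ^ k) x₁ y) = 0 :=
        intZero _ fun y => by simp
      have i3 : (∫ x in x₀..x₁, (vb₃.eval x - c) * (-(evalP (0 : Poly2) x y₀))) = 0 :=
        intZero _ fun x => by simp
      have i4 : (∫ x in x₀..x₁, (vb₄.eval x - c) * evalP (0 : Poly2) x y₁) = 0 :=
        intZero _ fun x => by simp
      rw [i1, i2, i3, i4] at hw
      have h5 : (x₁ - x₀) * (∫ y in y₀..y₁, (vb₁.eval y - c) * y ^ k) = 0 := by linarith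
      exact (mul_eq_zero.1 h5).resolve_left hnex
    have horth2 : ∀ k, k ≤ j → (∫ y in y₀..y₁, (vb₂.eval y - c) * y ^ k) = 0 := by
      intro k hk
      have hmem : memBDM j ((X 0 - C x₀) * X 1 ^ k, 0) := by
        refine ⟨(X 0 - C x₀) * X 1 ^ k, 0, 0, 0, ?_, ?_, by simp, by simp⟩
        · show ((X 0 - C x₀) * X 1 ^ k : Poly2).totalDegree ≤ j + 1
          have b1 := totalDegree_mul (X 0 - C x₀ : Poly2) (X 1 ^ k)
          have b2 := td_X_sub_C 0 x₀
          have b3 := hXpow 1 k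
          omega
        · show (0 : Poly2).totalDegree ≤ j + 1
          simp
      have hw := hWq _ _ hmem
      have i1 : (∫ y in y₀..y₁, (vb₁.eval y - c) * (-(evalP ((X 0 - C x₀) * X 1 ^ k) x₀ y))) = 0 :=
        intZero _ fun y => by simp
      have i2 : (∫ y in y₀..y₁, (vb₂.eval y - c) * evalP ((X 0 - C x₀) * X 1 ^ k) x₁ y)
          = (x₁ - x₀) * ∫ y in y₀..y₁, (vb₂.eval y - c) * y ^ k :=
        intScale _ _ fun y => by simp; ring
      have i3 : (∫ x in x₀..x₁, (vb₃.eval x - c) * (-(evalP (0 : Poly2) x y₀))) = 0 :=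
        intZero _ fun x => by simp
      have i4 : (∫ x in x₀..x₁, (vb₄.eval x - c) * evalP (0 : Poly2) x y₁) = 0 :=
        intZero _ fun x => by simp
      rw [i1, i2, i3, i4] at hw
      have h5 : (x₁ - x₀) * (∫ y in y₀..y₁, (vb₂.eval y - c) * y ^ k) = 0 := by linarith
      exact (mul_eq_zero.1 h5).resolve_left hnex
    have horth3 : ∀ k, k ≤ j → (∫ x in x₀..x₁, (vb₃.eval x - c) * x ^ k) = 0 := by
      intro k hk
      have hmem : memBDM j ((0 : Poly2), (X 1 - C y₁) * X 0 ^ k) := by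
        refine ⟨0, (X 1 - C y₁) * X 0 ^ k, 0, 0, ?_, ?_, by simp, by simp⟩
        · show (0 : Poly2).totalDegree ≤ j + 1
          simp
        · show ((X 1 - C y₁) * X 0 ^ k : Poly2).totalDegree ≤ j + 1
          have b1 := totalDegree_mul (X 1 - C y₁ : Poly2) (X 0 ^ k)
          have b2 := td_X_sub_C 1 y₁
          have b3 := hXpow 0 k
          omega
      have hw := hWq _ _ hmem
      have i1 : (∫ y in y₀..y₁, (vb₁.eval y - c) * (-(evalP (0 : Poly2) x₀ y))) = 0 :=
        intZero _ fun y => by simp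
      have i2 : (∫ y in y₀..y₁, (vb₂.eval y - c) * evalP (0 : Poly2) x₁ y) = 0 :=
        intZero _ fun y => by simp
      have i3 : (∫ x in x₀..x₁, (vb₃.eval x - c) * (-(evalP ((X 1 - C y₁) * X 0 ^ k) x y₀)))
          = (y₁ - y₀) * ∫ x in x₀..x₁, (vb₃.eval x - c) * x ^ k :=
        intScale _ _ fun x => by simp; ring
      have i4 : (∫ x in x₀..x₁, (vb₄.eval x - c) * evalP ((X 1 - C y₁) * X 0 ^ k) x y₁) = 0 :=
        intZero _ fun x => by simp
      rw [i1, i2, i3, i4] at hw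
      have h5 : (y₁ - y₀) * (∫ x in x₀..x₁, (vb₃.eval x - c) * x ^ k) = 0 := by linarith
      exact (mul_eq_zero.1 h5).resolve_left hney
    have horth4 : ∀ k, k ≤ j → (∫ x in x₀..x₁, (vb₄.eval x - c) * x ^ k) = 0 := by
      intro k hk
      have hmem : memBDM j ((0 : Poly2), (X 1 - C y₀) * X 0 ^ k) := by
        refine ⟨0, (X 1 - C y₀) * X 0 ^ k, 0, 0, ?_, ?_, by simp, by simp⟩
        · show (0 : Poly2).totalDegree ≤ j + 1
          simp
        · show ((X 1 - C y₀) * X 0 ^ k : Poly2).totalDegree ≤ j + 1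
          have b1 := totalDegree_mul (X 1 - C y₀ : Poly2) (X 0 ^ k)
          have b2 := td_X_sub_C 1 y₀
          have b3 := hXpow 0 k
          omega
      have hw := hWq _ _ hmem
      have i1 : (∫ y in y₀..y₁, (vb₁.eval y - c) * (-(evalP (0 : Poly2) x₀ y))) = 0 :=
        intZero _ fun y => by simp
      have i2 : (∫ y in y₀..y₁, (vb₂.eval y - c) * evalP (0 : Poly2) x₁ y) = 0 :=
        intZero _ fun y => by simp
      have i3 : (∫ x in x₀..x₁, (vb₃.eval x - c) * (-(evalP ((X 1 - C y₀) * X 0 ^ k) x y₀))) = 0 :=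
        intZero _ fun x => by simp
      have i4 : (∫ x in x₀..x₁, (vb₄.eval x - c) * evalP ((X 1 - C y₀) * X 0 ^ k) x y₁)
          = (y₁ - y₀) * ∫ x in x₀..x₁, (vb₄.eval x - c) * x ^ k :=
        intScale _ _ fun x => by simp; ring
      rw [i1, i2, i3, i4] at hw
      have h5 : (y₁ - y₀) * (∫ x in x₀..x₁, (vb₄.eval x - c) * x ^ k) = 0 := by linarith
      exact (mul_eq_zero.1 h5).resolve_left hney
    -- vb₂ = vb₁ and vb₄ = vb₃
    have hvb21 : vb₂ = vb₁ := by
      have hmem : memBDM j (Polynomial.aeval (X 1 : Poly2) (vb₂ - vb₁), 0) := by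
        refine ⟨Polynomial.aeval (X 1 : Poly2) (vb₂ - vb₁), 0, 0, 0, ?_, ?_, by simp, by simp⟩
        · show (Polynomial.aeval (X 1 : Poly2) (vb₂ - vb₁)).totalDegree ≤ j + 1
          refine (totalDegree_aeval_X_le _ _).trans ?_
          have := Polynomial.natDegree_sub_le vb₂ vb₁
          omega
        · show (0 : Poly2).totalDegree ≤ j + 1
          simp
      have hw := hWq _ _ hmem
      have i1 : (∫ y in y₀..y₁, (vb₁.eval y - c)
            * (-(evalP (Polynomial.aeval (X 1 : Poly2) (vb₂ - vb₁)) x₀ y)))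
          = (-1 : ℝ) * ∫ y in y₀..y₁, (vb₁.eval y - c) * (vb₂ - vb₁).eval y :=
        intScale _ _ fun y => by simp; ring
      have i2 : (∫ y in y₀..y₁, (vb₂.eval y - c)
            * evalP (Polynomial.aeval (X 1 : Poly2) (vb₂ - vb₁)) x₁ y)
          = ∫ y in y₀..y₁, (vb₂.eval y - c) * (vb₂ - vb₁).eval y :=
        intervalIntegral.integral_congr fun y _ => by simp
      have i3 : (∫ x in x₀..x₁, (vb₃.eval x - c) * (-(evalP (0 : Poly2) x y₀))) = 0 :=
        intZero _ fun x => by simp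
      have i4 : (∫ x in x₀..x₁, (vb₄.eval x - c) * evalP (0 : Poly2) x y₁) = 0 :=
        intZero _ fun x => by simp
      rw [i1, i2, i3, i4] at hw
      have hJ : (∫ y in y₀..y₁, ((vb₂ - vb₁).eval y)^2)
          = (∫ y in y₀..y₁, (vb₂.eval y - c) * (vb₂ - vb₁).eval y)
            - ∫ y in y₀..y₁, (vb₁.eval y - c) * (vb₂ - vb₁).eval y := by
        rw [← intervalIntegral.integral_sub
          (((vb₂.continuous.fun_sub continuous_const).fun_mul (vb₂ - vb₁).continuous).intervalIntegrable _ _)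
          (((vb₁.continuous.fun_sub continuous_const).fun_mul (vb₂ - vb₁).continuous).intervalIntegrable _ _)]
        refine intervalIntegral.integral_congr fun t _ => ?_
        simp only [Polynomial.eval_sub]
        ring
      have hsq : (∫ y in y₀..y₁, ((vb₂ - vb₁).eval y)^2) = 0 := by rw [hJ]; linarith
      exact sub_eq_zero.1 (poly1_zero_of_integral_sq_zero hy _ hsq)
    have hvb43 : vb₄ = vb₃ := by
      have hmem : memBDM j ((0 : Poly2), Polynomial.aeval (X 0 : Poly2) (vb₄ - vb₃)) := by
        refine ⟨0, Polynomial.aeval (X 0 : Poly2) (vb₄ - vb₃), 0, 0, ?_, ?_, by simp, by simp⟩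
        · show (0 : Poly2).totalDegree ≤ j + 1
          simp
        · show (Polynomial.aeval (X 0 : Poly2) (vb₄ - vb₃)).totalDegree ≤ j + 1
          refine (totalDegree_aeval_X_le _ _).trans ?_
          have := Polynomial.natDegree_sub_le vb₄ vb₃
          omega
      have hw := hWq _ _ hmem
      have i1 : (∫ y in y₀..y₁, (vb₁.eval y - c) * (-(evalP (0 : Poly2) x₀ y))) = 0 :=
        intZero _ fun y => by simp
      have i2 : (∫ y in y₀..y₁, (vb₂.eval y - c) * evalP (0 : Poly2) x₁ y) = 0 :=
        intZero _ fun y => by simp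
      have i3 : (∫ x in x₀..x₁, (vb₃.eval x - c)
            * (-(evalP (Polynomial.aeval (X 0 : Poly2) (vb₄ - vb₃)) x y₀)))
          = (-1 : ℝ) * ∫ x in x₀..x₁, (vb₃.eval x - c) * (vb₄ - vb₃).eval x :=
        intScale _ _ fun x => by simp; ring
      have i4 : (∫ x in x₀..x₁, (vb₄.eval x - c)
            * evalP (Polynomial.aeval (X 0 : Poly2) (vb₄ - vb₃)) x y₁)
          = ∫ x in x₀..x₁, (vb₄.eval x - c) * (vb₄ - vb₃).eval x :=
        intervalIntegral.integral_congr fun x _ => by simp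
      rw [i1, i2, i3, i4] at hw
      have hJ : (∫ x in x₀..x₁, ((vb₄ - vb₃).eval x)^2)
          = (∫ x in x₀..x₁, (vb₄.eval x - c) * (vb₄ - vb₃).eval x)
            - ∫ x in x₀..x₁, (vb₃.eval x - c) * (vb₄ - vb₃).eval x := by
        rw [← intervalIntegral.integral_sub
          (((vb₄.continuous.fun_sub continuous_const).fun_mul (vb₄ - vb₃).continuous).intervalIntegrable _ _)
          (((vb₃.continuous.fun_sub continuous_const).fun_mul (vb₄ - vb₃).continuous).intervalIntegrable _ _)]
        refine intervalIntegral.integral_congr fun t _ => ?_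
        simp only [Polynomial.eval_sub]
        ring
      have hsq : (∫ x in x₀..x₁, ((vb₄ - vb₃).eval x)^2) = 0 := by rw [hJ]; linarith
      exact sub_eq_zero.1 (poly1_zero_of_integral_sq_zero hx _ hsq)
    -- top moments via the curl fields
    have hM : (∫ x in x₀..x₁, (vb₃.eval x - c) * x ^ (j+1)) = 0 := by
      have hmem : memBDM j ((curlP (X 0 ^ (j+2) * X 1)).1, (curlP (X 0 ^ (j+2) * X 1)).2) :=
        ⟨0, 0, 1, 0, by show (0:Poly2).totalDegree ≤ j+1; simp,
          by show (0:Poly2).totalDegree ≤ j+1; simp, by simp, by simp⟩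
      have hw := hWq _ _ hmem
      have i1 : (∫ y in y₀..y₁, (vb₁.eval y - c) * (-(evalP ((curlP (X 0 ^ (j+2) * X 1)).1) x₀ y)))
          = x₀ ^ (j+2) * ∫ y in y₀..y₁, (vb₁.eval y - c) * y ^ 0 :=
        intScale _ _ fun y => by rw [evalC1a]; ring
      have i2 : (∫ y in y₀..y₁, (vb₂.eval y - c) * evalP ((curlP (X 0 ^ (j+2) * X 1)).1) x₁ y)
          = (-(x₁ ^ (j+2))) * ∫ y in y₀..y₁, (vb₂.eval y - c) * y ^ 0 :=
        intScale _ _ fun y => by rw [evalC1a]; ring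
      have i3 : (∫ x in x₀..x₁, (vb₃.eval x - c) * (-(evalP ((curlP (X 0 ^ (j+2) * X 1)).2) x y₀)))
          = (-(((j:ℝ)+2) * y₀)) * ∫ x in x₀..x₁, (vb₃.eval x - c) * x ^ (j+1) :=
        intScale _ _ fun x => by rw [evalC1b]; ring
      have i4 : (∫ x in x₀..x₁, (vb₄.eval x - c) * evalP ((curlP (X 0 ^ (j+2) * X 1)).2) x y₁)
          = (((j:ℝ)+2) * y₁) * ∫ x in x₀..x₁, (vb₃.eval x - c) * x ^ (j+1) := by
        rw [show vb₄ = vb₃ from hvb43]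
        exact intScale _ _ fun x => by rw [evalC1b]; ring
      rw [i1, i2, i3, i4, horth1 0 (by omega), horth2 0 (by omega)] at hw
      have h5 : (((j:ℝ)+2) * (y₁ - y₀)) * (∫ x in x₀..x₁, (vb₃.eval x - c) * x ^ (j+1)) = 0 := by
        linarith
      refine (mul_eq_zero.1 h5).resolve_left (ne_of_gt ?_)
      have : (0:ℝ) < y₁ - y₀ := sub_pos.2 hy
      positivity
    have hN : (∫ y in y₀..y₁, (vb₁.eval y - c) * y ^ (j+1)) = 0 := by
      have hmem : memBDM j ((curlP (X 0 * X 1 ^ (j+2))).1, (curlP (X 0 * X 1 ^ (j+2))).2) :=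
        ⟨0, 0, 0, 1, by show (0:Poly2).totalDegree ≤ j+1; simp,
          by show (0:Poly2).totalDegree ≤ j+1; simp, by simp, by simp⟩
      have hw := hWq _ _ hmem
      have i1 : (∫ y in y₀..y₁, (vb₁.eval y - c) * (-(evalP ((curlP (X 0 * X 1 ^ (j+2))).1) x₀ y)))
          = (((j:ℝ)+2) * x₀) * ∫ y in y₀..y₁, (vb₁.eval y - c) * y ^ (j+1) :=
        intScale _ _ fun y => by rw [evalC2a]; ring
      have i2 : (∫ y in y₀..y₁, (vb₂.eval y - c) * evalP ((curlP (X 0 * X 1 ^ (j+2))).1) x₁ y)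
          = (-(((j:ℝ)+2) * x₁)) * ∫ y in y₀..y₁, (vb₁.eval y - c) * y ^ (j+1) := by
        rw [show vb₂ = vb₁ from hvb21]
        exact intScale _ _ fun y => by rw [evalC2a]; ring
      have i3 : (∫ x in x₀..x₁, (vb₃.eval x - c) * (-(evalP ((curlP (X 0 * X 1 ^ (j+2))).2) x y₀)))
          = (-(y₀ ^ (j+2))) * ∫ x in x₀..x₁, (vb₃.eval x - c) * x ^ 0 :=
        intScale _ _ fun x => by rw [evalC2b]; ring
      have i4 : (∫ x in x₀..x₁, (vb₄.eval x - c) * evalP ((curlP (X 0 * X 1 ^ (j+2))).2) x y₁)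
          = (y₁ ^ (j+2)) * ∫ x in x₀..x₁, (vb₄.eval x - c) * x ^ 0 :=
        intScale _ _ fun x => by rw [evalC2b]; ring
      rw [i1, i2, i3, i4, horth3 0 (by omega), horth4 0 (by omega)] at hw
      have h5 : (((j:ℝ)+2) * (x₁ - x₀)) * (∫ y in y₀..y₁, (vb₁.eval y - c) * y ^ (j+1)) = 0 := by
        linarith
      refine (mul_eq_zero.1 h5).resolve_left (ne_of_gt ?_)
      have : (0:ℝ) < x₁ - x₀ := sub_pos.2 hx
      positivity
    -- conclude each edge polynomial is the constant c
    have hvb3 : vb₃ = Polynomial.C c := by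
      refine sub_eq_zero.1 (poly1_zero_of_orth hx (vb₃ - Polynomial.C c) (n := j+1) ?_ ?_)
      · refine (Polynomial.natDegree_sub_le _ _).trans ?_
        have := Polynomial.natDegree_C (a := c)
        omega
      · intro k hk
        have hcongr : (∫ t in x₀..x₁, (vb₃ - Polynomial.C c).eval t * t ^ k)
            = ∫ t in x₀..x₁, (vb₃.eval t - c) * t ^ k :=
          intervalIntegral.integral_congr fun t _ => by simp
        rcases Nat.lt_or_ge k (j+1) with hk' | hk'
        · rw [hcongr]; exact horth3 k (by omega)
        · rw [hcongr, show k = j+1 by omega]; exact hM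
    have hvb1 : vb₁ = Polynomial.C c := by
      refine sub_eq_zero.1 (poly1_zero_of_orth hy (vb₁ - Polynomial.C c) (n := j+1) ?_ ?_)
      · refine (Polynomial.natDegree_sub_le _ _).trans ?_
        have := Polynomial.natDegree_C (a := c)
        omega
      · intro k hk
        have hcongr : (∫ t in y₀..y₁, (vb₁ - Polynomial.C c).eval t * t ^ k)
            = ∫ t in y₀..y₁, (vb₁.eval t - c) * t ^ k :=
          intervalIntegral.integral_congr fun t _ => by simp
        rcases Nat.lt_or_ge k (j+1) with hk' | hk'
        · rw [hcongr]; exact horth1 k (by omega)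
        · rw [hcongr, show k = j+1 by omega]; exact hN
    refine ⟨c, fun x y hxy => hc0 x y, ?_, ?_, ?_, ?_⟩
    · intro y _; rw [hvb1]; simp
    · intro y _; rw [hvb21, hvb1]; simp
    · intro x _; rw [hvb3]; simp
    · intro x _; rw [hvb43, hvb3]; simp
  · rintro ⟨c, hv, hb1, hb2, hb3, hb4⟩ q _
    have hcK : ∀ z ∈ Set.Icc x₀ x₁ ×ˢ Set.Icc y₀ y₁, evalP v₀ z.1 z.2 = c := by
      rintro ⟨zx, zy⟩ hz
      exact hv zx zy hz
    have hFW := F_eq_W hx.le hy.le v₀ vb₁ vb₂ vb₃ vb₄ c hcK q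
    have z1 : (∫ y in y₀..y₁, (vb₁.eval y - c) * (-(evalP q.1 x₀ y))) = 0 := by
      have heq : Set.EqOn (fun y => (vb₁.eval y - c) * (-(evalP q.1 x₀ y))) (fun _ => (0:ℝ))
          (Set.uIcc y₀ y₁) := by
        intro y hy'
        rw [Set.uIcc_of_le hy.le] at hy'
        show (vb₁.eval y - c) * (-(evalP q.1 x₀ y)) = 0
        rw [hb1 y hy', sub_self, zero_mul]
      rw [intervalIntegral.integral_congr heq]
      simp
    have z2 : (∫ y in y₀..y₁, (vb₂.eval y - c) * evalP q.1 x₁ y) = 0 := by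
      have heq : Set.EqOn (fun y => (vb₂.eval y - c) * evalP q.1 x₁ y) (fun _ => (0:ℝ))
          (Set.uIcc y₀ y₁) := by
        intro y hy'
        rw [Set.uIcc_of_le hy.le] at hy'
        show (vb₂.eval y - c) * evalP q.1 x₁ y = 0
        rw [hb2 y hy', sub_self, zero_mul]
      rw [intervalIntegral.integral_congr heq]
      simp
    have z3 : (∫ x in x₀..x₁, (vb₃.eval x - c) * (-(evalP q.2 x y₀))) = 0 := by
      have heq : Set.EqOn (fun x => (vb₃.eval x - c) * (-(evalP q.2 x y₀))) (fun _ => (0:ℝ))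
          (Set.uIcc x₀ x₁) := by
        intro x hx'
        rw [Set.uIcc_of_le hx.le] at hx'
        show (vb₃.eval x - c) * (-(evalP q.2 x y₀)) = 0
        rw [hb3 x hx', sub_self, zero_mul]
      rw [intervalIntegral.integral_congr heq]
      simp
    have z4 : (∫ x in x₀..x₁, (vb₄.eval x - c) * evalP q.2 x y₁) = 0 := by
      have heq : Set.EqOn (fun x => (vb₄.eval x - c) * evalP q.2 x y₁) (fun _ => (0:ℝ))
          (Set.uIcc x₀ x₁) := by
        intro x hx'
        rw [Set.uIcc_of_le hx.le] at hx'
        show (vb₄.eval x - c) * evalP q.2 x y₁ = 0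
        rw [hb4 x hx', sub_self, zero_mul]
      rw [intervalIntegral.integral_congr heq]
      simp
    show Ffun x₀ x₁ y₀ y₁ v₀ vb₁ vb₂ vb₃ vb₄ q = 0
    rw [hFW, z1, z2, z3, z4]
    ring
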